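/- Let G be a symmetric 2×2 integer matrix whose two diagonal entries are even, with det G < 0 (indefinite), and such that 3·G⁻¹ has integer entries (i.e. there exists an integer matrix N with G·N = 3·I). Then G is integrally congruent either to [[0,1],[1,0]] or to [[0,3],[3,0]]: there exists P ∈ GL₂(ℤ) with Pᵀ G P = [[0,1],[1,0]] or Pᵀ G P = [[0,3],[3,0]]. -/

import Mathlib

open Matrix

lemma core_U (a b c : ℤ) (h : b^2 - 4*a*c = 1) :
    ∃ P : Matrix (Fin 2) (Fin 2) ℤ, IsUnit P.det ∧
      Pᵀ * !![2*a, b; b, 2*c] * P = !![0, 1; 1, 0] := by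
  obtain ⟨s, hs⟩ : ∃ s, b = 2*s - 1 := by
    rcases Int.even_or_odd b with ⟨t, ht⟩ | ⟨t, ht⟩
    · exfalso
      have : (4:ℤ) ∣ 1 := ⟨t*t - a*c, by subst ht; linear_combination -h⟩
      norm_num at this
    · exact ⟨t+1, by omega⟩
  subst hs
  have hss : s^2 - s - a*c = 0 := by
    have h4 : (4:ℤ)*(s^2 - s - a*c) = 0 := by linear_combination h
    linarith
  by_cases ha : a = 0
  · subst ha
    have hb : (2*s - 1 - 1) * (2*s - 1 + 1) = 0 := by linear_combination h
    rcases mul_eq_zero.mp hb with hb1 | hb1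
    · have hbv : s = 1 := by omega
      subst hbv
      refine ⟨!![1, -c; 0, 1], ?_, ?_⟩
      · simp [Matrix.det_fin_two_of]
      · ext i j
        fin_cases i <;> fin_cases j <;>
          simp [Matrix.mul_apply, Fin.sum_univ_two, Matrix.transpose_apply, Matrix.vecHead, Matrix.vecTail] <;> ring
    · have hbv : s = 0 := by omega
      subst hbv
      refine ⟨!![-1, c; 0, 1], ?_, ?_⟩
      · simp [Matrix.det_fin_two_of]
      · ext i j
        fin_cases i <;> fin_cases j <;>
          simp [Matrix.mul_apply, Fin.sum_univ_two, Matrix.transpose_apply, Matrix.vecHead, Matrix.vecTail] <;> ring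
  · set d : ℤ := (Int.gcd s a : ℤ) with hd_def
    have hdpos : 0 < Int.gcd s a := by
      rcases Nat.eq_zero_or_pos (Int.gcd s a) with h0 | h0
      · exact absurd (Int.gcd_eq_zero_iff.mp h0).2 ha
      · exact h0
    have hd0 : d ≠ 0 := Int.natCast_ne_zero.mpr hdpos.ne'
    obtain ⟨s1, hs1⟩ : d ∣ s := Int.gcd_dvd_left s a
    obtain ⟨a1, ha1⟩ : d ∣ a := Int.gcd_dvd_right s a
    have hs1' : s / d = s1 := by rw [hs1]; exact Int.mul_ediv_cancel_left _ hd0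
    have ha1' : a / d = a1 := by rw [ha1]; exact Int.mul_ediv_cancel_left _ hd0
    have hcop : Int.gcd s1 a1 = 1 := by
      rw [← hs1', ← ha1']
      exact Int.gcd_div_gcd_div_gcd hdpos
    obtain ⟨x, y, hbez⟩ : ∃ x y : ℤ, s1 * x + a1 * y = 1 := by
      refine ⟨Int.gcdA s1 a1, Int.gcdB s1 a1, ?_⟩
      have hb2 := Int.gcd_eq_gcd_ab s1 a1
      rw [hcop] at hb2
      exact_mod_cast hb2.symm
    have key : a*s^2 - (2*s-1)*s*a + c*a^2 = 0 := by linear_combination (-a)*hss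
    have h9 : d^2 * (a*s1^2 - (2*s-1)*s1*a1 + c*a1^2) = 0 := by
      linear_combination key + (-a*(s + d*s1) + (2*s-1)*a)*hs1 +
        ((2*s-1)*d*s1 - c*(a + d*a1))*ha1
    have hF : a*s1^2 - (2*s-1)*s1*a1 + c*a1^2 = 0 :=
      (mul_eq_zero.mp h9).resolve_left (pow_ne_zero 2 hd0)
    obtain ⟨m, hm⟩ : ∃ m : ℤ, m = 2*a*s1*y + (2*s-1)*(s1*x - a1*y) - 2*c*a1*x := ⟨_, rfl⟩
    obtain ⟨e, he⟩ : ∃ e : ℤ, e = a*y^2 + (2*s-1)*y*x + c*x^2 := ⟨_, rfl⟩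
    have hm2 : m^2 = 1 := by
      rw [hm]
      linear_combination (4*(a*y^2 + (2*s-1)*y*x + c*x^2))*hF +
        (((2*s-1)^2-4*a*c)*(s1*x + a1*y + 1))*hbez + h
    refine ⟨!![m*s1, y - m*e*s1; -(m*a1), x + m*e*a1], ?_, ?_⟩
    · rw [Matrix.det_fin_two_of]
      have hdd : m*s1*(x + m*e*a1) - (y - m*e*s1)*(-(m*a1)) = m := by
        linear_combination m*hbez
      rw [hdd]
      exact IsUnit.of_mul_eq_one (a := m) m (by linear_combination hm2)
    · ext i j
      fin_cases i <;> fin_cases j <;>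
        simp [Matrix.mul_apply, Fin.sum_univ_two, Matrix.transpose_apply, Matrix.vecHead, Matrix.vecTail]
      · linear_combination (2*m^2)*hF
      · linear_combination (-m)*hm + hm2 + (-2*m^2*e)*hF
      · linear_combination (-m)*hm + hm2 + (-2*m^2*e)*hF
      · linear_combination (-2)*he + (2*m*e)*hm + (-2*e)*hm2 + (2*m^2*e^2)*hF

/-- The indefinite half of the classification of rank-2 3-elementary even lattices:
a symmetric 2×2 integer matrix `G` with even diagonal, negative determinant, and
`3·G⁻¹` integral is integrally congruent to `U = [[0,1],[1,0]]` or to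
`U(3) = [[0,3],[3,0]]`. -/
theorem indefinite_even_three_elementary_rank_two_is_U_or_U3
    (G : Matrix (Fin 2) (Fin 2) ℤ)
    (hsymm : G.IsSymm)
    (heven : Even (G 0 0) ∧ Even (G 1 1))
    (hindef : G.det < 0)
    (helem : ∃ N : Matrix (Fin 2) (Fin 2) ℤ, G * N = 3 • (1 : Matrix (Fin 2) (Fin 2) ℤ)) :
    ∃ P : Matrix (Fin 2) (Fin 2) ℤ, IsUnit P.det ∧
      (Pᵀ * G * P = !![0, 1; 1, 0] ∨ Pᵀ * G * P = !![0, 3; 3, 0]) := by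
  obtain ⟨a, ha⟩ := heven.1
  obtain ⟨c, hc⟩ := heven.2
  have hsym10 : G 1 0 = G 0 1 := by
    have := congrFun (congrFun hsymm 0) 1
    simpa [Matrix.transpose_apply] using this
  have hG : G = !![2*a, G 0 1; G 0 1, 2*c] := by
    ext i j
    fin_cases i <;> fin_cases j <;>
      simp [Matrix.cons_val_zero, Matrix.cons_val_one] <;> omega
  set b := G 0 1 with hb
  clear_value b
  obtain ⟨N, hN⟩ := helem
  rw [hG] at hindef hN
  have hone : (3 • (1 : Matrix (Fin 2) (Fin 2) ℤ)) = !![3,0;0,3] := by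
    ext i j; fin_cases i <;> fin_cases j <;> simp [Matrix.one_apply]
  rw [hone] at hN
  have hdet : (!![2*a, b; b, 2*c] : Matrix (Fin 2) (Fin 2) ℤ).det = 4*a*c - b^2 := by
    rw [Matrix.det_fin_two_of]; ring
  have hdvd : (4*a*c - b^2) ∣ 9 := by
    refine ⟨N.det, ?_⟩
    have h1 := congrArg Matrix.det hN
    have det33 : (!![3,0;0,3] : Matrix (Fin 2) (Fin 2) ℤ).det = 9 := by
      rw [Matrix.det_fin_two_of]; norm_num
    rw [Matrix.det_mul, hdet, det33] at h1
    exact h1.symm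
  have hneg : 4*a*c - b^2 < 0 := by rw [hdet] at hindef; exact hindef
  have hge : -9 ≤ 4*a*c - b^2 := by
    have hle : -(4*a*c - b^2) ≤ 9 := Int.le_of_dvd (by norm_num) ((neg_dvd).mpr hdvd)
    linarith
  have hcase : 4*a*c - b^2 = -1 ∨ 4*a*c - b^2 = -3 ∨ 4*a*c - b^2 = -9 := by
    obtain ⟨k, hk⟩ : ∃ k, k = 4*a*c - b^2 := ⟨_, rfl⟩
    rw [← hk] at hdvd hneg hge ⊢
    interval_cases k <;> first | omega | (exfalso; revert hdvd; decide)
  rcases hcase with hk | hk | hk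
  · -- det = -1
    have hdisc : b^2 - 4*a*c = 1 := by linarith
    obtain ⟨P, hP, hPG⟩ := core_U a b c hdisc
    exact ⟨P, hP, Or.inl (by rw [hG]; exact hPG)⟩
  · -- det = -3 : impossible
    exfalso
    rcases Int.even_or_odd b with ⟨t, ht⟩ | ⟨t, ht⟩
    · have : (4:ℤ) ∣ 3 := ⟨t*t - a*c, by subst ht; linear_combination hk⟩
      norm_num at this
    · have : (4:ℤ) ∣ 2 := ⟨t*t + t - a*c, by subst ht; linear_combination hk⟩
      norm_num at this
  · -- det = -9
    set A : Matrix (Fin 2) (Fin 2) ℤ := !![2*a, b; b, 2*c] with hA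
    have hadj : adjugate A = !![2*c, -b; -b, 2*a] := by
      rw [hA, Matrix.adjugate_fin_two]
      ext i j; fin_cases i <;> fin_cases j <;> simp
    have hmuladj : A * adjugate A = (-9 : ℤ) • 1 := by
      rw [Matrix.mul_adjugate, hdet.trans hk]
    have hadjmul : adjugate A * A = (-9 : ℤ) • 1 := by
      rw [Matrix.adjugate_mul, hdet.trans hk]
    have hX : A * ((3:ℤ) • N + adjugate A) = 0 := by
      rw [Matrix.mul_add, Matrix.mul_smul, hN, hmuladj]
      ext i j; fin_cases i <;> fin_cases j <;>
        simp only [Matrix.add_apply, Matrix.smul_apply, Matrix.one_apply, Matrix.zero_apply, smul_eq_mul, Matrix.cons_val', Matrix.cons_val_zero, Matrix.cons_val_one, Matrix.head_cons, Matrix.head_fin_const, Matrix.empty_val', Matrix.cons_val_fin_one] <;> norm_num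
    have hX0 : (3:ℤ) • N + adjugate A = 0 := by
      have h2 : (-9:ℤ) • ((3:ℤ) • N + adjugate A) = 0 := by
        calc (-9:ℤ) • ((3:ℤ) • N + adjugate A)
            = ((-9:ℤ) • (1 : Matrix (Fin 2) (Fin 2) ℤ)) * ((3:ℤ) • N + adjugate A) := by
              rw [Matrix.smul_mul, Matrix.one_mul]
          _ = adjugate A * (A * ((3:ℤ) • N + adjugate A)) := by
              rw [← hadjmul, Matrix.mul_assoc]
          _ = 0 := by rw [hX, Matrix.mul_zero]
      ext i j
      have h3 := congrFun (congrFun h2 i) j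
      have h4 : (-9:ℤ) * ((3:ℤ) • N + adjugate A) i j = 0 := by
        simpa [Matrix.smul_apply, smul_eq_mul] using h3
      have h6 : ((3:ℤ) • N + adjugate A) i j = 0 := by linarith
      simpa using h6
    have hea : (3:ℤ) ∣ a := by
      have h5 := congrFun (congrFun hX0 1) 1
      rw [hadj] at h5
      have h6 : 3 * N 1 1 + 2*a = 0 := by
        simp only [Matrix.add_apply, Matrix.smul_apply, Matrix.one_apply, Matrix.zero_apply, smul_eq_mul, Matrix.cons_val', Matrix.cons_val_zero, Matrix.cons_val_one, Matrix.head_cons, Matrix.head_fin_const, Matrix.empty_val', Matrix.cons_val_fin_one] at h5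
        simpa using h5
      obtain ⟨n, hn⟩ : ∃ n, n = N 1 1 := ⟨_, rfl⟩
      rw [← hn] at h6
      omega
    have hec : (3:ℤ) ∣ c := by
      have h5 := congrFun (congrFun hX0 0) 0
      rw [hadj] at h5
      have h6 : 3 * N 0 0 + 2*c = 0 := by
        simp only [Matrix.add_apply, Matrix.smul_apply, Matrix.one_apply, Matrix.zero_apply, smul_eq_mul, Matrix.cons_val', Matrix.cons_val_zero, Matrix.cons_val_one, Matrix.head_cons, Matrix.head_fin_const, Matrix.empty_val', Matrix.cons_val_fin_one] at h5
        simpa using h5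
      obtain ⟨n, hn⟩ : ∃ n, n = N 0 0 := ⟨_, rfl⟩
      rw [← hn] at h6
      omega
    have heb : (3:ℤ) ∣ b := by
      have h5 := congrFun (congrFun hX0 0) 1
      rw [hadj] at h5
      have h6 : 3 * N 0 1 + -b = 0 := by
        simp only [Matrix.add_apply, Matrix.smul_apply, Matrix.one_apply, Matrix.zero_apply, smul_eq_mul, Matrix.cons_val', Matrix.cons_val_zero, Matrix.cons_val_one, Matrix.head_cons, Matrix.head_fin_const, Matrix.empty_val', Matrix.cons_val_fin_one] at h5
        simpa using h5
      obtain ⟨n, hn⟩ : ∃ n, n = N 0 1 := ⟨_, rfl⟩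
      rw [← hn] at h6
      omega
    obtain ⟨a', ha'⟩ := hea
    obtain ⟨b', hb'⟩ := heb
    obtain ⟨c', hc'⟩ := hec
    subst ha' hb' hc'
    have hdisc : b'^2 - 4*a'*c' = 1 := by
      have h9' : 9*(b'^2 - 4*a'*c') = 9 := by linear_combination -hk
      linarith
    obtain ⟨P, hP, hPG⟩ := core_U a' b' c' hdisc
    refine ⟨P, hP, Or.inr ?_⟩
    have hsc : A = (3:ℤ) • !![2*a', b'; b', 2*c'] := by
      rw [hA]
      ext i j; fin_cases i <;> fin_cases j <;>
        simp [Matrix.smul_apply, smul_eq_mul] <;> ring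
    rw [hG, hsc, Matrix.mul_smul, Matrix.smul_mul, hPG]
    ext i j; fin_cases i <;> fin_cases j <;>
      simp [Matrix.smul_apply, smul_eq_mul]
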